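/- arXiv:1801.09374 — 4 statements merged into one kernel-verified Lean document; each statement's English description precedes it below -/
import Mathlib

section
/- Let g₁, g₂ ∈ GL_2(ℚ). The elements g₁ ξ₀ g₁⁻¹ and g₂ ξ₀ g₂⁻¹ of SL_2(ℚ) are conjugate by an element of SL_2(ℚ) if and only if there exist rational numbers a, b with det(g₂) = (a² + b²)·det(g₁). -/
open Matrix

/-- The matrix `ξ₀` with rows `(0, -1)` and `(1, 0)`. -/
def xi0 : Matrix (Fin 2) (Fin 2) ℚ := !![0, -1; 1, 0]

lemma comm_form (M : Matrix (Fin 2) (Fin 2) ℚ) (hM : M * xi0 = xi0 * M) :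
    M = !![M 0 0, -(M 1 0); M 1 0, M 0 0] := by
  have hM' := hM
  rw [Matrix.eta_fin_two M] at hM'
  simp only [xi0, Matrix.mul_fin_two] at hM'
  have hij := Matrix.ext_iff.2 hM'
  have h1 := hij 0 1
  have h2 := hij 1 1
  simp at h1 h2
  conv_lhs => rw [Matrix.eta_fin_two M]
  rw [← h2, h1]

lemma cmat_comm (a b : ℚ) : !![a, -b; b, a] * xi0 = xi0 * !![a, -b; b, a] := by
  simp [xi0, Matrix.mul_fin_two]

lemma cmat_det (a b : ℚ) : (!![a, -b; b, a]).det = a ^ 2 + b ^ 2 := by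
  simp [Matrix.det_fin_two_of]; ring

/-- For `g₁, g₂ ∈ GL₂(ℚ)`, the elements `g₁ ξ₀ g₁⁻¹` and `g₂ ξ₀ g₂⁻¹`
of `SL₂(ℚ)` are conjugate by an element of `SL₂(ℚ)` if and only if
`det g₂ = (a² + b²) · det g₁` for some rationals `a, b`. -/
theorem conj_xi0_iff_det_ratio_sum_two_squares (g₁ g₂ : GL (Fin 2) ℚ) :
    (∃ h : Matrix.SpecialLinearGroup (Fin 2) ℚ,
      (h : Matrix (Fin 2) (Fin 2) ℚ) *
        ((g₁ : Matrix (Fin 2) (Fin 2) ℚ) * xi0 * ((g₁⁻¹ : GL (Fin 2) ℚ) : Matrix (Fin 2) (Fin 2) ℚ)) *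
        ((h⁻¹ : Matrix.SpecialLinearGroup (Fin 2) ℚ) : Matrix (Fin 2) (Fin 2) ℚ) =
      (g₂ : Matrix (Fin 2) (Fin 2) ℚ) * xi0 * ((g₂⁻¹ : GL (Fin 2) ℚ) : Matrix (Fin 2) (Fin 2) ℚ)) ↔
    ∃ a b : ℚ, ((g₂ : Matrix (Fin 2) (Fin 2) ℚ)).det = (a ^ 2 + b ^ 2) * ((g₁ : Matrix (Fin 2) (Fin 2) ℚ)).det := by
  set A : Matrix (Fin 2) (Fin 2) ℚ := (g₁ : Matrix (Fin 2) (Fin 2) ℚ) with hA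
  set A' : Matrix (Fin 2) (Fin 2) ℚ := ((g₁⁻¹ : GL (Fin 2) ℚ) : Matrix (Fin 2) (Fin 2) ℚ) with hA'
  set B : Matrix (Fin 2) (Fin 2) ℚ := (g₂ : Matrix (Fin 2) (Fin 2) ℚ) with hB
  set B' : Matrix (Fin 2) (Fin 2) ℚ := ((g₂⁻¹ : GL (Fin 2) ℚ) : Matrix (Fin 2) (Fin 2) ℚ) with hB'
  have hAA' : A * A' = 1 := by
    rw [hA, hA', ← Units.val_mul, mul_inv_cancel, Units.val_one]
  have hA'A : A' * A = 1 := mul_eq_one_comm.1 hAA'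
  have hBB' : B * B' = 1 := by
    rw [hB, hB', ← Units.val_mul, mul_inv_cancel, Units.val_one]
  have hB'B : B' * B = 1 := mul_eq_one_comm.1 hBB'
  have hdAA' : A.det * A'.det = 1 := by
    have := congrArg Matrix.det hAA'
    rwa [Matrix.det_mul, Matrix.det_one] at this
  have hdBB' : B.det * B'.det = 1 := by
    have := congrArg Matrix.det hBB'
    rwa [Matrix.det_mul, Matrix.det_one] at this
  have hdA : A.det ≠ 0 := left_ne_zero_of_mul_eq_one hdAA'
  have hdB : B.det ≠ 0 := left_ne_zero_of_mul_eq_one hdBB'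
  have hdA' : A'.det = A.det⁻¹ := eq_inv_of_mul_eq_one_right (mul_comm A.det A'.det ▸ hdAA')
  have hdB' : B'.det = B.det⁻¹ := eq_inv_of_mul_eq_one_right (mul_comm B.det B'.det ▸ hdBB')
  constructor
  · rintro ⟨h, hh⟩
    set H : Matrix (Fin 2) (Fin 2) ℚ := (h : Matrix (Fin 2) (Fin 2) ℚ) with hH
    set H' : Matrix (Fin 2) (Fin 2) ℚ :=
      ((h⁻¹ : Matrix.SpecialLinearGroup (Fin 2) ℚ) : Matrix (Fin 2) (Fin 2) ℚ) with hH'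
    have hHH' : H * H' = 1 := by
      rw [hH, hH', ← Matrix.SpecialLinearGroup.coe_mul, mul_inv_cancel,
        Matrix.SpecialLinearGroup.coe_one]
    have hH'H : H' * H = 1 := mul_eq_one_comm.1 hHH'
    have hdH : H.det = 1 := h.2
    set M : Matrix (Fin 2) (Fin 2) ℚ := B' * H * A with hM
    have key := congrArg (· * (H * A)) hh
    have l1 : H * (A * xi0 * A') * H' * (H * A) = H * (A * xi0 * A') * (H' * H) * A := by
      noncomm_ring
    rw [hH'H] at l1
    have l2 : H * (A * xi0 * A') * 1 * A = H * (A * xi0) * (A' * A) := by noncomm_ring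
    rw [hA'A] at l2
    have l3 : H * A * xi0 = B * xi0 * B' * (H * A) := by
      calc H * A * xi0 = H * (A * xi0) * 1 := by noncomm_ring
        _ = H * (A * xi0 * A') * H' * (H * A) := by rw [l1, l2]
        _ = B * xi0 * B' * (H * A) := key
    have hcomm : M * xi0 = xi0 * M := by
      calc M * xi0 = B' * (H * A * xi0) := by rw [hM]; noncomm_ring
        _ = B' * (B * xi0 * B' * (H * A)) := by rw [l3]
        _ = (B' * B) * xi0 * (B' * (H * A)) := by noncomm_ring
        _ = xi0 * M := by rw [hB'B, hM]; noncomm_ring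
    have hform := comm_form M hcomm
    have hdM : M.det = A.det * B.det⁻¹ := by
      rw [hM, Matrix.det_mul, Matrix.det_mul, hdB', hdH]; ring
    have hdM2 : M.det = (M 0 0) ^ 2 + (M 1 0) ^ 2 := by
      conv_lhs => rw [hform]
      exact cmat_det _ _
    have hs : (M 0 0) ^ 2 + (M 1 0) ^ 2 ≠ 0 := by
      rw [← hdM2, hdM]
      exact mul_ne_zero hdA (inv_ne_zero hdB)
    refine ⟨M 0 0 / ((M 0 0) ^ 2 + (M 1 0) ^ 2), M 1 0 / ((M 0 0) ^ 2 + (M 1 0) ^ 2), ?_⟩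
    have key2 : B.det * ((M 0 0) ^ 2 + (M 1 0) ^ 2) = A.det := by
      have h1 : (M 0 0) ^ 2 + (M 1 0) ^ 2 = A.det * B.det⁻¹ := by rw [← hdM2, hdM]
      rw [h1]
      field_simp
    rw [← key2]
    field_simp
  · rintro ⟨a, b, hab⟩
    have hs : a ^ 2 + b ^ 2 ≠ 0 := by
      intro h0
      rw [h0, zero_mul] at hab
      exact hdB hab
    set C : Matrix (Fin 2) (Fin 2) ℚ := !![a, -b; b, a] with hC
    set C' : Matrix (Fin 2) (Fin 2) ℚ :=
      !![a / (a ^ 2 + b ^ 2), b / (a ^ 2 + b ^ 2);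
         -(b / (a ^ 2 + b ^ 2)), a / (a ^ 2 + b ^ 2)] with hC'
    have hCC' : C * C' = 1 := by
      ext i j
      fin_cases i <;> fin_cases j <;>
        simp [hC, hC', Matrix.mul_fin_two, Matrix.one_fin_two] <;>
        field_simp <;> ring
    have hC'C : C' * C = 1 := mul_eq_one_comm.1 hCC'
    have hC'comm : C' * xi0 = xi0 * C' := by
      have := cmat_comm (a / (a ^ 2 + b ^ 2)) (-(b / (a ^ 2 + b ^ 2)))
      simpa [hC'] using this
    have hdC' : C'.det = (a ^ 2 + b ^ 2)⁻¹ := by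
      have h1 : C.det = a ^ 2 + b ^ 2 := cmat_det a b
      have h2 := congrArg Matrix.det hCC'
      rw [Matrix.det_mul, Matrix.det_one, h1] at h2
      field_simp
      linarith [h2]
    set H : Matrix (Fin 2) (Fin 2) ℚ := B * C' * A' with hH
    have hdH : H.det = 1 := by
      rw [hH, Matrix.det_mul, Matrix.det_mul, hdC', hdA', hab]
      field_simp
    refine ⟨⟨H, hdH⟩, ?_⟩
    set h : Matrix.SpecialLinearGroup (Fin 2) ℚ := ⟨H, hdH⟩ with hhdef
    have hHcoe : (h : Matrix (Fin 2) (Fin 2) ℚ) = H := rfl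
    set H' : Matrix (Fin 2) (Fin 2) ℚ :=
      ((h⁻¹ : Matrix.SpecialLinearGroup (Fin 2) ℚ) : Matrix (Fin 2) (Fin 2) ℚ) with hH'
    have hHH' : H * H' = 1 := by
      rw [hH', ← hHcoe, ← Matrix.SpecialLinearGroup.coe_mul, mul_inv_cancel,
        Matrix.SpecialLinearGroup.coe_one]
    have key : H * (A * xi0 * A') = B * xi0 * B' * H := by
      calc H * (A * xi0 * A')
          = B * C' * (A' * A) * xi0 * A' := by rw [hH]; noncomm_ring
        _ = B * (C' * xi0) * A' := by rw [hA'A]; noncomm_ring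
        _ = B * xi0 * (C' * A') := by rw [hC'comm]; noncomm_ring
        _ = B * xi0 * ((B' * B) * (C' * A')) := by rw [hB'B]; noncomm_ring
        _ = B * xi0 * B' * H := by rw [hH]; noncomm_ring
    calc (h : Matrix (Fin 2) (Fin 2) ℚ) * (A * xi0 * A') * H'
        = B * xi0 * B' * (H * H') := by rw [hHcoe, key]; noncomm_ring
      _ = B * xi0 * B' := by rw [hHH', Matrix.mul_one]
end

section
/- There is a bijection between the set of conjugacy classes of elements of order 4 in SL_2(ℚ) and the quotient group ℚ^×/N, where N is the subgroup of ℚ^× consisting of the nonzero rational numbers of the form a² + b² with a, b ∈ ℚ. -/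
/-- The subgroup `N ⊆ ℚˣ` of nonzero rational numbers expressible as a sum of two
squares of rational numbers. -/
def sumTwoSquares : Subgroup ℚˣ where
  carrier := {x : ℚˣ | ∃ a b : ℚ, (x : ℚ) = a ^ 2 + b ^ 2}
  one_mem' := ⟨1, 0, by norm_num⟩
  mul_mem' := by
    rintro x y ⟨a, b, hx⟩ ⟨c, d, hy⟩
    exact ⟨a * c - b * d, a * d + b * c, by rw [Units.val_mul, hx, hy]; ring⟩
  inv_mem' := by
    rintro x ⟨a, b, hx⟩
    have hx0 : (x : ℚ) ≠ 0 := x.ne_zero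
    refine ⟨a / (x : ℚ), b / (x : ℚ), ?_⟩
    rw [Units.val_inv_eq_inv_val]
    field_simp
    rw [hx]

namespace SL2AuxOrderFour

open Matrix

abbrev G2 := Matrix.SpecialLinearGroup (Fin 2) ℚ

lemma det_e (x : G2) : x.val 0 0 * x.val 1 1 - x.val 0 1 * x.val 1 0 = 1 := by
  have := x.prop; rwa [Matrix.det_fin_two] at this

lemma b_ne_zero (x : G2) (h : x.val 0 0 + x.val 1 1 = 0) : x.val 0 1 ≠ 0 := by
  have hd := det_e x
  intro hb
  rw [hb] at hd
  nlinarith [sq_nonneg (x.val 0 0), sq_nonneg (x.val 1 1)]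

lemma sq_two_ne (T : ℚ) : T ^ 2 ≠ 2 := by
  intro h
  have h2 : ((|T| : ℚ) : ℝ) ^ 2 = 2 := by
    push_cast
    rw [sq_abs]
    exact_mod_cast congrArg (fun q : ℚ => (q : ℝ)) h
  have h' : ((|T| : ℚ) : ℝ) = Real.sqrt 2 := by
    rw [← h2, Real.sqrt_sq (by positivity)]
  exact irrational_sqrt_two ⟨|T|, h'⟩

lemma sq_neg (x : G2) (h : x.val 0 0 + x.val 1 1 = 0) : x.val * x.val = -1 := by
  have hd := det_e x
  ext i j
  fin_cases i <;> fin_cases j <;>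
    simp [Matrix.mul_apply, Fin.sum_univ_succ, Matrix.one_apply] <;>
    [ linear_combination x.val 0 0 * h - hd;
      linear_combination x.val 0 1 * h;
      linear_combination x.val 1 0 * h;
      linear_combination x.val 1 1 * h - hd]

lemma order_four (x : G2) (h : x.val 0 0 + x.val 1 1 = 0) : orderOf x = 4 := by
  have hsq := sq_neg x h
  have h4 : x ^ 2 ^ (1 + 1) = 1 := by
    apply Subtype.ext
    rw [Matrix.SpecialLinearGroup.coe_pow, Matrix.SpecialLinearGroup.coe_one]
    norm_num
    rw [show (4:ℕ) = 2 + 2 by norm_num, pow_add, pow_two, hsq]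
    simp
  have h2 : ¬ x ^ 2 ^ 1 = 1 := by
    intro hc
    have hc' : (x.val) * (x.val) = 1 := by
      have := congrArg Subtype.val hc
      rw [pow_one, pow_two] at this
      exact_mod_cast this
    rw [hsq] at hc'
    have := congrFun (congrFun hc' 0) 0
    simp [Matrix.one_apply] at this
    norm_num at this
  have := orderOf_eq_prime_pow (p := 2) (n := 1) h2 h4
  norm_num at this
  exact this

lemma trace_zero_of_order_four (x : G2) (hx : orderOf x = 4) :
    x.val 0 0 + x.val 1 1 = 0 := by
  have hd := det_e x
  have h4 : x ^ 4 = 1 := by rw [← hx]; exact pow_orderOf_eq_one x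
  have h4m : x.val * x.val * (x.val * x.val) = 1 := by
    have := congrArg Subtype.val h4
    rw [Matrix.SpecialLinearGroup.coe_pow] at this
    rw [show (4:ℕ) = 2+2 by norm_num, pow_add, pow_two] at this
    exact_mod_cast this
  have h2m : x.val * x.val ≠ 1 := by
    intro hc
    have : x ^ 2 = 1 := by
      apply Subtype.ext
      rw [Matrix.SpecialLinearGroup.coe_pow, pow_two, hc]
      simp
    have hdvd := orderOf_dvd_of_pow_eq_one this
    rw [hx] at hdvd
    norm_num at hdvd
  set a := x.val 0 0 with ha
  set b := x.val 0 1 with hb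
  set c := x.val 1 0 with hc
  set d := x.val 1 1 with hdd
  have f00 := congrFun (congrFun h4m 0) 0
  have f01 := congrFun (congrFun h4m 0) 1
  have f10 := congrFun (congrFun h4m 1) 0
  have f11 := congrFun (congrFun h4m 1) 1
  simp [Matrix.mul_apply, Fin.sum_univ_succ, Matrix.one_apply] at f00 f01 f10 f11
  have E01 : b * (a + d) * ((a + d) ^ 2 - 2) = 0 := by
    linear_combination f01 + (2 * b * (a+d)) * hd
  have E10 : c * (a + d) * ((a + d) ^ 2 - 2) = 0 := by
    linear_combination f10 + (2 * c * (a+d)) * hd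
  have E00 : (a - d) * (a + d) * ((a + d) ^ 2 - 2) = 0 := by
    linear_combination f00 - f11 + (2 * (a^2 - d^2)) * hd
  by_contra hT
  rcases eq_or_ne ((a + d) ^ 2) 2 with h2 | h2
  · exact sq_two_ne _ h2
  · have hT2 : (a + d) ^ 2 - 2 ≠ 0 := sub_ne_zero.mpr h2
    have hb0 : b = 0 := by
      rcases mul_eq_zero.mp E01 with h | h
      · rcases mul_eq_zero.mp h with h | h
        · exact h
        · exact absurd h hT
      · exact absurd h hT2
    have hc0 : c = 0 := by
      rcases mul_eq_zero.mp E10 with h | h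
      · rcases mul_eq_zero.mp h with h | h
        · exact h
        · exact absurd h hT
      · exact absurd h hT2
    have had : a = d := by
      rcases mul_eq_zero.mp E00 with h | h
      · rcases mul_eq_zero.mp h with h | h
        · linarith [sub_eq_zero.mp h]
        · exact absurd h hT
      · exact absurd h hT2
    have ha1 : a * a = 1 := by
      rw [had] at hd ⊢
      rw [hb0, hc0] at hd
      linarith
    apply h2m
    ext i j
    fin_cases i <;> fin_cases j <;>
      simp [Matrix.mul_apply, Fin.sum_univ_succ, Matrix.one_apply, ← ha, ← hb, ← hc, ← hdd,
        hb0, hc0, ← had, ha1]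

/-- the standard trace-zero element with parameter t -/
def Sm (t : ℚˣ) : G2 :=
  ⟨!![0, (t:ℚ); -((t:ℚ)⁻¹), 0], by simp [Matrix.det_fin_two_of]⟩

lemma Sm_apply01 (t : ℚˣ) : (Sm t).val 0 1 = t := by simp [Sm]

lemma Sm_trace (t : ℚˣ) : (Sm t).val 0 0 + (Sm t).val 1 1 = 0 := by simp [Sm]

/-- Lemma B : every trace-zero element is conjugate to the standard one -/
lemma isConj_Sm (x : G2) (h : x.val 0 0 + x.val 1 1 = 0) (t : ℚˣ)
    (ht : (t : ℚ) = x.val 0 1) : IsConj (Sm t) x := by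
  have hd := det_e x
  have hb := b_ne_zero x h
  have hg : (!![1, 0; x.val 0 0 / x.val 0 1, 1] : Matrix (Fin 2) (Fin 2) ℚ).det = 1 := by
    simp [Matrix.det_fin_two_of]
  set g : G2 := ⟨_, hg⟩ with hgdef
  have key : g * x = Sm t * g := by
    apply Subtype.ext
    simp only [Matrix.SpecialLinearGroup.coe_mul]
    ext i j
    fin_cases i <;> fin_cases j <;>
      simp [hgdef, Sm, Matrix.mul_apply, Fin.sum_univ_succ, ht] <;>
      field_simp <;>
      first
      | linear_combination h - x.val 0 0 * h + hd
      | linear_combination x.val 0 0 * h - hd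
      | linear_combination h
      | ring
  apply IsConj.symm
  rw [isConj_iff]
  exact ⟨g, by rw [key, mul_inv_cancel_right]⟩

/-- Lemma C : if t'/t is a sum of two squares then Sm t and Sm t' are conjugate -/
lemma isConj_Sm_Sm (t t' : ℚˣ) (u v : ℚ) (h : (t' : ℚ) = (t : ℚ) * (u ^ 2 + v ^ 2)) :
    IsConj (Sm t) (Sm t') := by
  have ht : (t : ℚ) ≠ 0 := t.ne_zero
  have ht' : (t' : ℚ) ≠ 0 := t'.ne_zero
  have hn : u ^ 2 + v ^ 2 ≠ 0 := by
    intro h0; rw [h0, mul_zero] at h; exact ht' h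
  set n : ℚ := u ^ 2 + v ^ 2 with hndef
  have hg : (!![u, (t:ℚ) * v; -v / ((t:ℚ) * n), u / n] : Matrix (Fin 2) (Fin 2) ℚ).det = 1 := by
    rw [Matrix.det_fin_two_of]
    field_simp
    ring
  set g : G2 := ⟨_, hg⟩ with hgdef
  have key : g * Sm t = Sm t' * g := by
    apply Subtype.ext
    simp only [Matrix.SpecialLinearGroup.coe_mul]
    ext i j
    fin_cases i <;> fin_cases j <;>
      simp [hgdef, Sm, Matrix.mul_apply, Fin.sum_univ_succ, h] <;>
      field_simp <;> ring
  rw [isConj_iff]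
  exact ⟨g, by rw [key, mul_inv_cancel_right]⟩

/-- Lemma A : the (0,1) entry mod sums of two squares is a conjugation invariant
on trace-zero elements -/
lemma invariant (x y : G2) (hx : x.val 0 0 + x.val 1 1 = 0)
    (hconj : IsConj x y) :
    ∃ u v : ℚ, y.val 0 1 / x.val 0 1 = u ^ 2 + v ^ 2 := by
  have hdx := det_e x
  have hbx := b_ne_zero x hx
  obtain ⟨g, hg⟩ := isConj_iff.mp hconj
  have hgm : g.val * x.val = y.val * g.val := by
    have : g * x = y * g := by rw [← hg]; group
    exact_mod_cast congrArg Subtype.val this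
  have hdg := det_e g
  set p := g.val 0 0
  set q := g.val 0 1
  set a := x.val 0 0
  set b := x.val 0 1
  set c := x.val 1 0
  have eq00 := congrFun (congrFun hgm 0) 0
  have eq01 := congrFun (congrFun hgm 0) 1
  simp [Matrix.mul_apply, Fin.sum_univ_succ] at eq00 eq01
  have hb' : y.val 0 1 = p^2*b + p*q*(x.val 1 1) - p*q*a - q^2*c := by
    linear_combination -p*eq01 + q*eq00 - (y.val 0 1)*hdg
  have key : y.val 0 1 * b = (p*b - a*q)^2 + q^2 := by
    have hd' : x.val 1 1 = -a := by linarith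
    rw [hb', hd']
    linear_combination (q^2 : ℚ) * hdx - q^2 * a * hx
  refine ⟨(p*b - a*q)/b, q/b, ?_⟩
  field_simp
  first
  | linear_combination (b - 1) * key
  | linear_combination b * key
  | linear_combination key

end SL2AuxOrderFour

open SL2AuxOrderFour in
/-- There is a bijection between the set of conjugacy classes of
elements of order `4` in `SL₂(ℚ)` and the quotient group `ℚˣ/N`, where `N` is the
subgroup of nonzero rationals which are sums of two rational squares. -/
theorem conjClasses_orderFour_SL2_equiv_quotient :
    Nonempty
      ({c : ConjClasses (Matrix.SpecialLinearGroup (Fin 2) ℚ) | ∃ x ∈ c.carrier, orderOf x = 4} ≃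
        (ℚˣ ⧸ sumTwoSquares)) := by
  -- the map from the quotient to the set of conjugacy classes
  have hf : ∀ s t : ℚˣ, (QuotientGroup.leftRel sumTwoSquares) s t →
      (ConjClasses.mk (Sm s) = ConjClasses.mk (Sm t)) := by
    intro s t hst
    have hmem : s⁻¹ * t ∈ sumTwoSquares := QuotientGroup.leftRel_apply.mp hst
    obtain ⟨u, v, huv⟩ := hmem
    rw [ConjClasses.mk_eq_mk_iff_isConj]
    apply isConj_Sm_Sm s t u v
    rw [← huv]
    push_cast
    field_simp
  let f : ℚˣ → {c : ConjClasses (Matrix.SpecialLinearGroup (Fin 2) ℚ) |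
      ∃ x ∈ c.carrier, orderOf x = 4} :=
    fun t => ⟨ConjClasses.mk (Sm t), Sm t, ConjClasses.mem_carrier_mk, order_four _ (Sm_trace t)⟩
  let Ψ : (ℚˣ ⧸ sumTwoSquares) → {c : ConjClasses (Matrix.SpecialLinearGroup (Fin 2) ℚ) |
      ∃ x ∈ c.carrier, orderOf x = 4} :=
    Quotient.lift f (fun s t hst => Subtype.ext (hf s t hst))
  have hinj : Function.Injective Ψ := by
    intro z w
    refine QuotientGroup.induction_on z (fun s => QuotientGroup.induction_on w (fun t h => ?_))
    have hc : ConjClasses.mk (Sm s) = ConjClasses.mk (Sm t) := congrArg Subtype.val h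
    have hconj : IsConj (Sm s) (Sm t) := ConjClasses.mk_eq_mk_iff_isConj.mp hc
    obtain ⟨u, v, huv⟩ := invariant (Sm s) (Sm t) (Sm_trace s) hconj
    rw [Sm_apply01, Sm_apply01] at huv
    apply (QuotientGroup.eq).mpr
    refine ⟨u, v, ?_⟩
    push_cast
    rw [← huv]
    field_simp
  have hsurj : Function.Surjective Ψ := by
    rintro ⟨c, x, hxc, hx4⟩
    have htr := trace_zero_of_order_four x hx4
    have hb := b_ne_zero x htr
    refine ⟨QuotientGroup.mk (Units.mk0 (x.val 0 1) hb), ?_⟩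
    apply Subtype.ext
    show ConjClasses.mk (Sm (Units.mk0 (x.val 0 1) hb)) = c
    rw [← ConjClasses.mem_carrier_iff_mk_eq.mp hxc]
    rw [ConjClasses.mk_eq_mk_iff_isConj]
    exact isConj_Sm x htr _ rfl
  exact ⟨(Equiv.ofBijective Ψ ⟨hinj, hsurj⟩).symm⟩
end

section
/- The set of conjugacy classes of elements of order 4 in SL_2(ℚ) is infinite. -/
lemma dvd_of_dvd_sq_add_sq (p : ℕ) (hp : p.Prime) (hp3 : p % 4 = 3) (a b : ℤ)
    (h : (p : ℤ) ∣ a ^ 2 + b ^ 2) : (p : ℤ) ∣ a ∧ (p : ℤ) ∣ b := by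
  haveI : Fact p.Prime := ⟨hp⟩
  have hprime : Prime (p : GaussianInt) :=
    (GaussianInt.prime_iff_mod_four_eq_three_of_nat_prime p).2 hp3
  have hfac : (⟨a, b⟩ : GaussianInt) * ⟨a, -b⟩ = ((a ^ 2 + b ^ 2 : ℤ) : GaussianInt) := by
    ext <;> simp [Zsqrtd.re_mul, Zsqrtd.im_mul, sq] <;> ring
  have hdvd : (p : GaussianInt) ∣ (⟨a, b⟩ : GaussianInt) * ⟨a, -b⟩ := by
    rw [hfac]
    exact_mod_cast (Zsqrtd.intCast_dvd_intCast (d := -1) (p : ℤ) _).2 h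
  rcases hprime.dvd_mul.1 hdvd with h' | h'
  · have h'' := (Zsqrtd.intCast_dvd (p:ℤ) _).1 (by exact_mod_cast h' : ((p:ℤ):GaussianInt) ∣ (⟨a, b⟩ : GaussianInt))
    exact ⟨h''.1, h''.2⟩
  · have h'' := (Zsqrtd.intCast_dvd (p:ℤ) _).1 (by exact_mod_cast h' : ((p:ℤ):GaussianInt) ∣ (⟨a, -b⟩ : GaussianInt))
    exact ⟨h''.1, by simpa using h''.2⟩

lemma descent (p q : ℕ) (hp : p.Prime) (hp3 : p % 4 = 3) (hq : q.Prime) (hne : p ≠ q) :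
    ∀ n : ℕ, ∀ c : ℤ, c.natAbs = n → c ≠ 0 → ∀ a b : ℤ,
      (p : ℤ) * (a ^ 2 + b ^ 2) ≠ (q : ℤ) * c ^ 2 := by
  intro n
  induction n using Nat.strong_induction_on with
  | _ n ih =>
    intro c hcn hc a b hEq
    have hpZ : Prime (p : ℤ) := Nat.prime_iff_prime_int.mp hp
    have hpq : ¬ (p : ℤ) ∣ (q : ℤ) := by
      rw [Int.natCast_dvd_natCast]
      exact fun h => hne ((Nat.prime_dvd_prime_iff_eq hp hq).1 h)
    -- p ∣ c
    have hpc : (p : ℤ) ∣ c := by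
      have h1 : (p : ℤ) ∣ (q : ℤ) * c ^ 2 := ⟨a ^ 2 + b ^ 2, hEq.symm⟩
      have h2 : (p : ℤ) ∣ c ^ 2 := (hpZ.dvd_mul.1 h1).resolve_left hpq
      exact hpZ.dvd_of_dvd_pow h2
    obtain ⟨c', rfl⟩ := hpc
    have hp0 : (p : ℤ) ≠ 0 := by exact_mod_cast hp.ne_zero
    have hEq2 : a ^ 2 + b ^ 2 = (q : ℤ) * ((p : ℤ) * c' ^ 2) :=
      mul_left_cancel₀ hp0 (by linear_combination hEq)
    have hpab : (p : ℤ) ∣ a ^ 2 + b ^ 2 := ⟨(q : ℤ) * c' ^ 2, by linarith [hEq2]⟩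
    obtain ⟨⟨a', rfl⟩, ⟨b', rfl⟩⟩ := dvd_of_dvd_sq_add_sq p hp hp3 a b hpab
    have hc' : c' ≠ 0 := by
      intro h; apply hc; rw [h, mul_zero]
    have hEq3 : (p : ℤ) * (a' ^ 2 + b' ^ 2) = (q : ℤ) * c' ^ 2 := by
      have h2 : (p:ℤ)^2 * ((p:ℤ) * (a' ^ 2 + b' ^ 2)) = (p:ℤ)^2 * ((q : ℤ) * c' ^ 2) := by
        ring_nf; ring_nf at hEq; linarith [hEq]
      exact mul_left_cancel₀ (pow_ne_zero 2 hp0) h2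
    have hlt : c'.natAbs < n := by
      rw [← hcn, Int.natAbs_mul]
      have h1 : 0 < c'.natAbs := Int.natAbs_pos.2 hc'
      calc c'.natAbs < 2 * c'.natAbs := by omega
        _ ≤ (p : ℤ).natAbs * c'.natAbs := Nat.mul_le_mul_right _ (by simpa using hp.two_le)
    exact ih _ hlt c' rfl hc' a' b' hEq3

lemma rat_not_sum_sq (p q : ℕ) (hp : p.Prime) (hp3 : p % 4 = 3) (hq : q.Prime) (hne : p ≠ q) :
    ∀ u v : ℚ, u ^ 2 + v ^ 2 ≠ (q : ℚ) / p := by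
  intro u v h
  have hp0 : (p : ℚ) ≠ 0 := Nat.cast_ne_zero.2 hp.ne_zero
  have hud : ((u.den : ℚ)) ≠ 0 := Nat.cast_ne_zero.2 u.den_ne_zero
  have hvd : ((v.den : ℚ)) ≠ 0 := Nat.cast_ne_zero.2 v.den_ne_zero
  have hu := Rat.num_div_den u
  have hv := Rat.num_div_den v
  rw [div_eq_iff hud] at hu
  rw [div_eq_iff hvd] at hv
  have hc0 : ((u.den : ℤ) * v.den) ≠ 0 := by
    simp [Int.mul_ne_zero_iff, u.den_ne_zero, v.den_ne_zero]
  apply descent p q hp hp3 hq hne _ _ rfl hc0 (u.num * v.den) (v.num * u.den)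
  have hQ : (p : ℚ) * (((u.num * v.den : ℤ) : ℚ) ^ 2 + ((v.num * u.den : ℤ) : ℚ) ^ 2)
      = (q : ℚ) * (((u.den : ℤ) * v.den : ℤ) : ℚ) ^ 2 := by
    have h' : (p : ℚ) * (u ^ 2 + v ^ 2) = q := by rw [h]; field_simp
    push_cast
    rw [hu, hv]
    linear_combination ((u.den : ℚ) ^ 2 * (v.den : ℚ) ^ 2) * h'
  exact_mod_cast hQ

open Matrix

abbrev SL2Q := Matrix.SpecialLinearGroup (Fin 2) ℚ

def Sm (r : ℚ) (hr : r ≠ 0) : SL2Q :=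
  ⟨!![0, r; -r⁻¹, 0], by
    rw [Matrix.det_fin_two_of]; field_simp; norm_num⟩

lemma Sm_sq (r : ℚ) (hr : r ≠ 0) :
    ((Sm r hr) ^ 2 : SL2Q).1 = !![(-1 : ℚ), 0; 0, -1] := by
  rw [pow_two]
  show (Sm r hr).1 * (Sm r hr).1 = _
  ext i j
  fin_cases i <;> fin_cases j <;>
    simp [Sm, Matrix.mul_apply, Fin.sum_univ_two] <;> field_simp

lemma Sm_order (r : ℚ) (hr : r ≠ 0) : orderOf (Sm r hr) = 4 := by
  have h2 : ¬ (Sm r hr) ^ 2 ^ 1 = 1 := by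
    intro h
    have := congrArg (fun m : SL2Q => (m.1 0 0)) h
    simp only [pow_one] at this
    rw [Sm_sq] at this
    exact absurd this (by norm_num)
  have h4 : (Sm r hr) ^ 2 ^ 2 = 1 := by
    apply Subtype.ext
    show ((Sm r hr) ^ (2 ^ 2) : SL2Q).1 = _
    have : ((Sm r hr) ^ (2 ^ 2) : SL2Q) = ((Sm r hr) ^ 2) ^ 2 := by
      rw [show (2 ^ 2 : ℕ) = 2 * 2 from rfl, pow_mul]
    rw [this]
    have h1 : (((Sm r hr) ^ 2) ^ 2 : SL2Q).1 = (((Sm r hr) ^ 2 : SL2Q).1) * (((Sm r hr) ^ 2 : SL2Q).1) := by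
      rw [pow_two]; rfl
    rw [h1, Sm_sq]
    ext i j
    fin_cases i <;> fin_cases j <;>
      simp [Matrix.mul_apply, Fin.sum_univ_two]
  have := orderOf_eq_prime_pow h2 h4
  simpa using this

lemma not_conj (p q : ℕ) (hp : p.Prime) (hp3 : p % 4 = 3) (hq : q.Prime) (hne : p ≠ q)
    (hp0 : (p : ℚ) ≠ 0) (hq0 : (q : ℚ) ≠ 0) : ¬ IsConj (Sm p hp0) (Sm q hq0) := by
  rintro ⟨g, hg⟩
  set G : Matrix (Fin 2) (Fin 2) ℚ := ((g : SL2Q) : Matrix (Fin 2) (Fin 2) ℚ) with hG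
  have hm : G * (Sm p hp0).1 = (Sm q hq0).1 * G := by
    have h := congrArg (fun m : SL2Q => m.1) hg
    simpa using h
  have e00 := congrFun (congrFun hm 0) 0
  have e01 := congrFun (congrFun hm 0) 1
  simp [Sm, Matrix.mul_apply, Fin.sum_univ_two] at e00 e01
  have hdet : G 0 0 * G 1 1 - G 0 1 * G 1 0 = 1 := by
    have h := ((g : SL2Q)).2
    rwa [Matrix.det_fin_two] at h
  apply rat_not_sum_sq p q hp hp3 hq hne (G 0 0) ((q : ℚ) * G 1 0)
  have e00' : -(G 0 1) = (p : ℚ) * ((q : ℚ) * G 1 0) := by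
    field_simp at e00
    linear_combination e00
  field_simp
  linear_combination G 0 0 * e01 - ((q:ℚ) * G 1 0) * e00' + (q:ℚ) * hdet

lemma mod_four_of_zmod {p : ℕ} (h : (p : ZMod 4) = 3) : p % 4 = 3 := by
  have h2 := congrArg ZMod.val h
  rwa [ZMod.val_natCast] at h2

/-- The set of conjugacy classes of elements of order `4` in `SL₂(ℚ)`
is infinite. -/
theorem conjClasses_orderFour_SL2_infinite :
    {c : ConjClasses (Matrix.SpecialLinearGroup (Fin 2) ℚ) |
      ∃ x ∈ c.carrier, orderOf x = 4}.Infinite := by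
  classical
  have hP3 : {p : ℕ | p.Prime ∧ (p : ZMod 4) = 3}.Infinite :=
    Nat.infinite_setOfPred_prime_and_eq_mod (a := (3 : ZMod 4)) (by decide)
  set f : ℕ → ConjClasses SL2Q := fun n =>
    if h : (n : ℚ) ≠ 0 then ConjClasses.mk (Sm n h) else ConjClasses.mk 1 with hf
  have hmem : ∀ p ∈ {p : ℕ | p.Prime ∧ (p : ZMod 4) = 3},
      f p ∈ {c : ConjClasses SL2Q | ∃ x ∈ c.carrier, orderOf x = 4} := by
    rintro p ⟨hp, -⟩
    have h0 : ((p : ℚ)) ≠ 0 := Nat.cast_ne_zero.2 hp.ne_zero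
    simp only [hf, dif_pos h0]
    exact ⟨Sm p h0, ConjClasses.mem_carrier_mk, Sm_order p h0⟩
  have hinj : Set.InjOn f {p : ℕ | p.Prime ∧ (p : ZMod 4) = 3} := by
    rintro p ⟨hp, hp3⟩ q ⟨hq, hq3⟩ hfe
    by_contra hne
    have hp0 : ((p : ℚ)) ≠ 0 := Nat.cast_ne_zero.2 hp.ne_zero
    have hq0 : ((q : ℚ)) ≠ 0 := Nat.cast_ne_zero.2 hq.ne_zero
    rw [hf] at hfe
    simp only [dif_pos hp0, dif_pos hq0] at hfe
    exact not_conj p q hp (mod_four_of_zmod hp3) hq hne hp0 hq0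
      (ConjClasses.mk_eq_mk_iff_isConj.1 hfe)
  exact ((hP3.image hinj).mono (Set.image_subset_iff.2 hmem))
end

section
/- Let ℤ[i] be the ring of Gaussian integers. For an integer a and a Gaussian integer b, there exists a polynomial P ∈ ℤ[T] with P(−1) = a and P(i) = b if and only if (1 + i) divides b − a in ℤ[i]. Consequently, the image of ℤ[T]/((T + 1)(T² + 1)) under P ↦ (P(−1), P(i)) is the subring {(a, b) ∈ ℤ × ℤ[i] : a ≡ b (mod (1 + i))}. -/
open Polynomial

lemma eval_pair_key (a : ℤ) (b : GaussianInt) :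
    (∃ P : ℤ[X], P.eval (-1) = a ∧ aeval (Zsqrtd.sqrtd : GaussianInt) P = b) ↔
      (1 + Zsqrtd.sqrtd : GaussianInt) ∣ (b - (a : GaussianInt)) := by
  constructor
  · rintro ⟨P, h1, h2⟩
    have hdvd := sub_dvd_eval_sub (Zsqrtd.sqrtd : GaussianInt) (-1)
      (P.map (Int.castRingHom GaussianInt))
    have e1 : (P.map (Int.castRingHom GaussianInt)).eval (Zsqrtd.sqrtd : GaussianInt)
        = aeval (Zsqrtd.sqrtd : GaussianInt) P := by
      simp [aeval_def, eval_map]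
    have e2 : (P.map (Int.castRingHom GaussianInt)).eval (-1)
        = ((P.eval (-1) : ℤ) : GaussianInt) := by
      rw [eval_map]
      have : ((-1 : GaussianInt)) = (Int.castRingHom GaussianInt) (-1) := by simp
      rw [this, eval₂_at_apply]
      simp
    rw [e1, e2, h1, h2] at hdvd
    have : (Zsqrtd.sqrtd : GaussianInt) - (-1) = 1 + Zsqrtd.sqrtd := by ring
    rwa [this] at hdvd
  · rintro ⟨c, hc⟩
    refine ⟨C a + (X + 1) * (C c.re + C c.im * X), by simp, ?_⟩
    have hc' : (c.re : GaussianInt) + (c.im : GaussianInt) * Zsqrtd.sqrtd = c := by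
      ext <;> simp
    simp only [map_add, map_mul, aeval_C, aeval_X, aeval_one]
    simp only [algebraMap_int_eq, eq_intCast]
    rw [hc']
    have : (Zsqrtd.sqrtd + 1 : GaussianInt) * c = (1 + Zsqrtd.sqrtd) * c := by ring
    rw [this, ← hc]
    ring

/-- For an integer `a` and a Gaussian integer `b`, there exists
`P ∈ ℤ[T]` with `P(-1) = a` and `P(i) = b` if and only if `(1 + i) ∣ (b - a)` in `ℤ[i]`.
Consequently, the image of `ℤ[T]/((T+1)(T²+1))` under `P ↦ (P(-1), P(i))` is the subring
`{(a, b) ∈ ℤ × ℤ[i] : a ≡ b (mod (1 + i))}`. -/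
theorem eval_pair_image_int_poly_gaussian :
    (∀ (a : ℤ) (b : GaussianInt),
      (∃ P : ℤ[X], P.eval (-1) = a ∧ aeval (Zsqrtd.sqrtd : GaussianInt) P = b) ↔
        (1 + Zsqrtd.sqrtd : GaussianInt) ∣ (b - (a : GaussianInt))) ∧
    Set.range (fun P : ℤ[X] =>
        ((P.eval (-1), aeval (Zsqrtd.sqrtd : GaussianInt) P) : ℤ × GaussianInt)) =
      {p : ℤ × GaussianInt | (1 + Zsqrtd.sqrtd : GaussianInt) ∣ (p.2 - (p.1 : GaussianInt))} := by
  refine ⟨eval_pair_key, ?_⟩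
  ext ⟨a, b⟩
  simp only [Set.mem_range, Set.mem_setOf_eq, Prod.mk.injEq]
  exact eval_pair_key a b
end
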